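/- arXiv:1412.7646 — 4 statements merged into one kernel-verified Lean document; each statement's English description precedes it below -/
import Mathlib

section
/- For left degree d = 2, the density evolution map f(p) = 1 − e^{−2p/η} satisfies f(p) < p for every p ∈ (0, 1] if and only if η ≥ 2. (This is the entry d = 2, minimum η = 2.0000 of Table I.) -/
/-- For left degree `d = 2`, the density evolution map `f(p) = 1 - exp (-(2 p) / η)`
satisfies `f p < p` for every `p ∈ (0, 1]` if and only if `η ≥ 2`. -/
theorem density_evolution_d2_contracting_iff (η : ℝ) (hη : 0 < η) :
    (∀ p : ℝ, 0 < p → p ≤ 1 → 1 - Real.exp (-(2 * p) / η) < p) ↔ 2 ≤ η := by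
  constructor
  · intro h
    by_contra hlt
    push_neg at hlt
    set p : ℝ := min ((2 - η) / 2) 1 with hp
    have hp0 : 0 < p := lt_min (by linarith) one_pos
    have hp1 : p ≤ 1 := min_le_right _ _
    have hple : p ≤ (2 - η) / 2 := min_le_left _ _
    have hkey := h p hp0 hp1
    set x : ℝ := 2 * p / η with hx
    have hx0 : 0 < x := by positivity
    have hexp1 : 1 + x < Real.exp x := by
      have := Real.add_one_lt_exp (x := x) (ne_of_gt hx0)
      linarith
    have hxpos : (0:ℝ) < 1 + x := by linarith
    have hinv : Real.exp (-(2 * p) / η) < (1 + x)⁻¹ := by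
      have : Real.exp (-(2 * p) / η) = (Real.exp x)⁻¹ := by
        rw [← Real.exp_neg, hx]; ring_nf
      rw [this]
      exact inv_strictAnti₀ hxpos hexp1
    have hfrac : p ≤ 1 - (1 + x)⁻¹ := by
      have h1 : 0 < η + 2 * p := by linarith
      have hinveq : (1 + x)⁻¹ = η / (η + 2 * p) := by
        rw [hx]; field_simp
      rw [hinveq, le_sub_iff_add_le, add_comm, ← le_sub_iff_add_le, div_le_iff₀ h1]
      nlinarith
    linarith
  · intro h2 p hp0 hp1
    have hx0 : -(2 * p) / η ≠ 0 := by
      have : (0:ℝ) < 2 * p / η := by positivity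
      intro hc
      rw [neg_div] at hc
      linarith [neg_eq_zero.mp hc]
    have := Real.add_one_lt_exp hx0
    have h2p : 2 * p / η ≤ p := by
      rw [div_le_iff₀ hη]; nlinarith
    have : -(2 * p) / η = -(2 * p / η) := by ring
    nlinarith [Real.add_one_lt_exp hx0]
end

section
/- Let D ≥ 1 be an integer and ε > 0 with D ≥ 1/ε. Set H(D) = Σ_{j=1}^{D} 1/j, λ(x) = (1/H(D)) Σ_{m=1}^{D} x^m/m, and d̄ = H(D)(1 + 1/D). Then for every x ∈ (0, 1], exp(−(d̄/(1+ε)) λ(x)) > 1 − x; that is, the right degree generating polynomial ρ(x) = exp(−(d̄/(1+ε))(1−x)) satisfies ρ(1 − λ(x)) > 1 − x for all x ∈ (0, 1]. (This is the contraction condition guaranteeing that density evolution for the irregular ensemble with R = (1+ε)K right nodes drives the edge density to zero whenever D > 1/ε.) -/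
/-- Contraction condition for the irregular ensemble: if `D ≥ 1/ε` then, with
`H(D) = ∑_{j=1}^D 1/j`, `λ(x) = (1/H(D)) ∑_{m=1}^D x^m/m` and `d̄ = H(D)(1 + 1/D)`,
for every `x ∈ (0,1]` we have `exp (-(d̄/(1+ε)) λ(x)) > 1 - x`. -/
theorem irregular_density_evolution_contraction (D : ℕ) (hD : 1 ≤ D)
    (ε : ℝ) (hε : 0 < ε) (hDε : 1 / ε ≤ (D : ℝ))
    (H : ℝ) (hH : H = ∑ j ∈ Finset.Icc 1 D, (1 : ℝ) / (j : ℝ))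
    (lam : ℝ → ℝ) (hlam : ∀ x : ℝ, lam x = (1 / H) * ∑ m ∈ Finset.Icc 1 D, x ^ m / (m : ℝ))
    (dbar : ℝ) (hdbar : dbar = H * (1 + 1 / (D : ℝ))) :
    ∀ x : ℝ, 0 < x → x ≤ 1 → 1 - x < Real.exp (-(dbar / (1 + ε)) * lam x) := by
  intro x hx hx1
  have hDpos : (0 : ℝ) < (D : ℝ) := by exact_mod_cast hD
  have hHpos : 0 < H := by
    rw [hH]
    apply Finset.sum_pos
    · intro j hj
      simp only [Finset.mem_Icc] at hj
      have : (0 : ℝ) < (j : ℝ) := by exact_mod_cast hj.1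
      positivity
    · exact ⟨1, Finset.mem_Icc.mpr ⟨le_refl 1, hD⟩⟩
  set S : ℝ := ∑ m ∈ Finset.Icc 1 D, x ^ m / (m : ℝ) with hS
  have hSnonneg : 0 ≤ S := by
    apply Finset.sum_nonneg
    intro m hm
    simp only [Finset.mem_Icc] at hm
    have : (0 : ℝ) < (m : ℝ) := by exact_mod_cast hm.1
    positivity
  set c : ℝ := (1 + 1 / (D : ℝ)) / (1 + ε) with hc
  have hc1 : c ≤ 1 := by
    rw [hc, div_le_one (by linarith)]
    have h1D : 1 / (D : ℝ) ≤ ε := by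
      rw [div_le_iff₀ hDpos]
      rw [div_le_iff₀ hε] at hDε
      linarith [mul_comm ε (D : ℝ)]
    linarith
  have hexp_eq : -(dbar / (1 + ε)) * lam x = -(c * S) := by
    rw [hlam, hdbar, hc, hS]
    field_simp
  rw [hexp_eq]
  have key : -(c * S) ≥ -S := by
    have : c * S ≤ 1 * S := mul_le_mul_of_nonneg_right hc1 hSnonneg
    linarith
  rcases eq_or_lt_of_le hx1 with heq | hlt
  · have : 1 - x = 0 := by rw [← heq]; ring
    rw [this]
    exact Real.exp_pos _
  · -- x < 1 : show S < -log(1-x)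
    have habs : |x| < 1 := by rw [abs_of_pos hx]; exact hlt
    have hsum := Real.hasSum_pow_div_log_of_abs_lt_one habs
    have hSum : Summable (fun n : ℕ => x ^ (n + 1) / (n + 1 : ℝ)) := hsum.summable
    have hSeq : S = ∑ n ∈ Finset.range D, x ^ (n + 1) / ((n : ℝ) + 1) := by
      rw [hS]
      rw [show Finset.Icc 1 D = Finset.range (D + 1) \ {0} by
        ext n; simp [Finset.mem_Icc, Nat.lt_succ_iff, Nat.one_le_iff_ne_zero, and_comm]]
      rw [Finset.sum_sdiff_eq_sub (by simp), Finset.sum_range_succ']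
      simp
    have hle : ∑ n ∈ Finset.range (D + 1), x ^ (n + 1) / ((n : ℝ) + 1) ≤ -Real.log (1 - x) := by
      apply sum_le_hasSum _ _ hsum
      intro i _
      have : (0 : ℝ) < (i : ℝ) + 1 := by positivity
      positivity
    have hlt' : S < -Real.log (1 - x) := by
      rw [Finset.sum_range_succ] at hle
      have hpos : 0 < x ^ (D + 1) / ((D : ℝ) + 1) := by positivity
      rw [hSeq]; linarith
    have h1x : 0 < 1 - x := by linarith
    calc 1 - x = Real.exp (Real.log (1 - x)) := (Real.exp_log h1x).symm
      _ < Real.exp (-S) := Real.exp_lt_exp.mpr (by linarith)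
      _ ≤ Real.exp (-(c * S)) := Real.exp_le_exp.mpr key
end

section
/- Let N ≥ 2, let T ⊆ {0, …, N−1} with |T| ≥ 2, and let (a_n)_{n∈T} be nonzero complex numbers. Then the set of real vectors (g_0, …, g_{N−1}) ∈ ℝ^N for which there exists ℓ ∈ {0, …, N−1} with Σ_{n∈T} a_n g_n (e^{2πin/N} − e^{2πiℓ/N}) = 0 has N-dimensional Lebesgue measure zero. (Consequently, when the column scalings G_n are drawn from a continuous distribution, the event that a multi-ton bin passes the noiseless ratio test — i.e., that the ratio of its two DFT measurements equals e^{2πiℓ/N} for some ℓ, or that the bin measurements vanish — has probability zero.) -/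
open MeasureTheory

/-- The set of scaling vectors `g ∈ ℝ^N` for which a multi-ton (support `T`, `|T| ≥ 2`,
nonzero coefficients `a_n`) passes the noiseless ratio test — i.e. for which there is
`ℓ ∈ [N]` with `∑_{n ∈ T} a_n g_n (e^{2πin/N} - e^{2πiℓ/N}) = 0` — has Lebesgue
measure zero. -/
theorem multiton_ratio_test_measure_zero (N : ℕ) (hN : 2 ≤ N)
    (T : Finset (Fin N)) (hT : 2 ≤ T.card)
    (a : Fin N → ℂ) (ha : ∀ n ∈ T, a n ≠ 0) :
    MeasureTheory.volume
      {g : Fin N → ℝ | ∃ ℓ : Fin N,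
        ∑ n ∈ T, a n * (g n : ℂ) *
          (Complex.exp (2 * Real.pi * Complex.I * ((n : ℕ) : ℂ) / N) -
            Complex.exp (2 * Real.pi * Complex.I * ((ℓ : ℕ) : ℂ) / N)) = 0} = 0 := by
  have hexp : ∀ m : Fin N, Complex.exp (2 * Real.pi * Complex.I * ((m : ℕ) : ℂ) / N)
      = Complex.exp (2 * Real.pi * Complex.I / N) ^ (m : ℕ) := by
    intro m
    rw [← Complex.exp_nat_mul]
    congr 1
    ring
  have hprim : IsPrimitiveRoot (Complex.exp (2 * Real.pi * Complex.I / N)) N :=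
    Complex.isPrimitiveRoot_exp N (by omega)
  have hNe : ∀ n ℓ : Fin N, n ≠ ℓ →
      Complex.exp (2 * Real.pi * Complex.I * ((n : ℕ) : ℂ) / N) ≠
        Complex.exp (2 * Real.pi * Complex.I * ((ℓ : ℕ) : ℂ) / N) := by
    intro n ℓ hne h
    rw [hexp n, hexp ℓ] at h
    exact hne (Fin.ext (hprim.pow_inj n.isLt ℓ.isLt h))
  have key : ∀ ℓ : Fin N, MeasureTheory.volume
      {g : Fin N → ℝ | ∑ n ∈ T, a n * (g n : ℂ) *
          (Complex.exp (2 * Real.pi * Complex.I * ((n : ℕ) : ℂ) / N) -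
            Complex.exp (2 * Real.pi * Complex.I * ((ℓ : ℕ) : ℂ) / N)) = 0} = 0 := by
    intro ℓ
    set c : Fin N → ℂ := fun n =>
      Complex.exp (2 * Real.pi * Complex.I * ((n : ℕ) : ℂ) / N) -
        Complex.exp (2 * Real.pi * Complex.I * ((ℓ : ℕ) : ℂ) / N) with hc
    let φ : (Fin N → ℝ) →ₗ[ℝ] ℂ :=
      { toFun := fun g => ∑ n ∈ T, a n * (g n : ℂ) * c n
        map_add' := by
          intro g h
          simp only [Pi.add_apply, Complex.ofReal_add]
          rw [← Finset.sum_add_distrib]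
          exact Finset.sum_congr rfl fun n _ => by ring
        map_smul' := by
          intro r g
          simp only [Pi.smul_apply, smul_eq_mul, Complex.ofReal_mul, RingHom.id_apply]
          rw [Finset.smul_sum]
          exact Finset.sum_congr rfl fun n _ => by
            rw [Complex.real_smul]; ring }
    have hset : {g : Fin N → ℝ | ∑ n ∈ T, a n * (g n : ℂ) *
          (Complex.exp (2 * Real.pi * Complex.I * ((n : ℕ) : ℂ) / N) -
            Complex.exp (2 * Real.pi * Complex.I * ((ℓ : ℕ) : ℂ) / N)) = 0}
        = (LinearMap.ker φ : Set (Fin N → ℝ)) := by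
      ext g
      simp [φ, LinearMap.mem_ker, hc]
    rw [hset]
    apply Measure.addHaar_submodule
    -- ker φ ≠ ⊤
    obtain ⟨n₀, hn₀T, hn₀ℓ⟩ := Finset.exists_mem_ne (lt_of_lt_of_le one_lt_two hT) ℓ
    intro htop
    have hmem : (Pi.single n₀ (1 : ℝ)) ∈ LinearMap.ker φ := htop.symm ▸ Submodule.mem_top
    have hmem : φ (Pi.single n₀ (1 : ℝ)) = 0 := hmem
    have hval : φ (Pi.single n₀ (1 : ℝ)) = a n₀ * c n₀ := by
      simp only [φ, LinearMap.coe_mk, AddHom.coe_mk]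
      rw [Finset.sum_eq_single_of_mem n₀ hn₀T]
      · simp
      · intro n _ hn
        simp [Pi.single_eq_of_ne hn]
    rw [hval] at hmem
    rcases mul_eq_zero.mp hmem with h | h
    · exact ha n₀ hn₀T h
    · exact hNe n₀ ℓ hn₀ℓ (sub_eq_zero.mp h)
  have : {g : Fin N → ℝ | ∃ ℓ : Fin N,
        ∑ n ∈ T, a n * (g n : ℂ) *
          (Complex.exp (2 * Real.pi * Complex.I * ((n : ℕ) : ℂ) / N) -
            Complex.exp (2 * Real.pi * Complex.I * ((ℓ : ℕ) : ℂ) / N)) = 0}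
      = ⋃ ℓ : Fin N, {g : Fin N → ℝ | ∑ n ∈ T, a n * (g n : ℂ) *
          (Complex.exp (2 * Real.pi * Complex.I * ((n : ℕ) : ℂ) / N) -
            Complex.exp (2 * Real.pi * Complex.I * ((ℓ : ℕ) : ℂ) / N)) = 0} := by
    ext g; simp [Set.mem_iUnion]
  rw [this]
  exact measure_iUnion_null key
end

section
/- Let S be a nonempty finite set of m left nodes, d ≥ 1 an integer, and f a map assigning to each s ∈ S a finite set f(s) of right nodes with |f(s)| = d. Suppose the (ε, 1/2)-expansion property holds hereditarily on S: for every nonempty subset T ⊆ S, |⋃_{s∈T} f(s)| > d|T|/2. Then there is an ordering s_1, …, s_m of the elements of S such that for every i ∈ {1, …, m} there exists a right node r ∈ f(s_i) with r ∉ f(s_j) for all j > i. (Hence the peeling decoder, which at each step removes a left node attached to a single-ton right node, removes all of S.) -/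
/-- Counting lemma: if `2 |N(T)| > ∑_{s∈T} |f s|`, some right node in `N(T)` is
covered by exactly one left node of `T`. -/
lemma exists_unique_neighbor {α β : Type*} [DecidableEq α] [DecidableEq β]
    (T : Finset α) (f : α → Finset β)
    (h : ∑ s ∈ T, (f s).card < 2 * (T.biUnion f).card) :
    ∃ s ∈ T, ∃ r ∈ f s, ∀ s' ∈ T, r ∈ f s' → s' = s := by
  by_contra hc
  push_neg at hc
  set N := T.biUnion f with hN
  have hsum : ∑ s ∈ T, (f s).card = ∑ r ∈ N, (T.filter (fun s => r ∈ f s)).card := by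
    have : ∀ s ∈ T, (f s).card = ∑ r ∈ N, (if r ∈ f s then 1 else 0) := by
      intro s hs
      rw [← Finset.sum_filter, Finset.sum_const, smul_eq_mul, mul_one,
        Finset.filter_mem_eq_inter, Finset.inter_eq_right.mpr]
      intro r hr
      exact Finset.mem_biUnion.mpr ⟨s, hs, hr⟩
    rw [Finset.sum_congr rfl this, Finset.sum_comm]
    congr 1
    ext r
    rw [← Finset.sum_filter, Finset.sum_const, smul_eq_mul, mul_one]
  have hlb : ∀ r ∈ N, 2 ≤ (T.filter (fun s => r ∈ f s)).card := by
    intro r hr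
    obtain ⟨s, hsT, hsr⟩ := Finset.mem_biUnion.mp hr
    obtain ⟨s', hs'T, hs'r, hne⟩ := hc s hsT r hsr
    have : {s', s} ⊆ T.filter (fun s => r ∈ f s) := by
      intro x hx
      simp only [Finset.mem_insert, Finset.mem_singleton] at hx
      rcases hx with rfl | rfl <;> simp [Finset.mem_filter, *]
    calc (2 : ℕ) = ({s', s} : Finset α).card := by
            rw [Finset.card_insert_of_notMem (by simpa using hne), Finset.card_singleton]
      _ ≤ _ := Finset.card_le_card this
  have : 2 * N.card ≤ ∑ r ∈ N, (T.filter (fun s => r ∈ f s)).card := by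
    calc 2 * N.card = ∑ _r ∈ N, 2 := by rw [Finset.sum_const]; ring
      _ ≤ _ := Finset.sum_le_sum hlb
  omega

/-- Hereditary expansion implies complete peeling: if every left node `s ∈ S` has
exactly `d` right neighbors `f s` and every nonempty `T ⊆ S` satisfies
`|⋃_{s ∈ T} f s| > d |T| / 2`, then the elements of `S` can be ordered
`s_1, …, s_m` so that each `s_i` has a right neighbor shared with no later `s_j`
(a single-ton for the remaining graph), so the peeling decoder removes all of `S`. -/
theorem hereditary_expansion_peeling_order {α β : Type*} [DecidableEq α] [DecidableEq β]
    (S : Finset α) (hS : S.Nonempty) (d : ℕ) (hd : 1 ≤ d)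
    (f : α → Finset β) (hf : ∀ s ∈ S, (f s).card = d)
    (hexp : ∀ T : Finset α, T ⊆ S → T.Nonempty →
      ((d * T.card : ℕ) : ℝ) / 2 < ((T.biUnion f).card : ℝ)) :
    ∃ l : List α, l.Nodup ∧ l.toFinset = S ∧
      ∀ i : Fin l.length, ∃ r ∈ f (l.get i),
        ∀ j : Fin l.length, (i : ℕ) < (j : ℕ) → r ∉ f (l.get j) := by
  clear hS hd
  -- strong induction on the cardinality of S
  induction S using Finset.strongInductionOn with
  | _ S ih =>
    rcases S.eq_empty_or_nonempty with rfl | hne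
    · exact ⟨[], by simp, by simp, fun i => absurd i.2 (by simp)⟩
    · -- find a left node with a uniquely covered right neighbor
      have hcount : ∑ s ∈ S, (f s).card < 2 * (S.biUnion f).card := by
        have h := hexp S (le_refl _) hne
        have hsum : ∑ s ∈ S, (f s).card = d * S.card := by
          rw [Finset.sum_congr rfl hf, Finset.sum_const, smul_eq_mul, mul_comm]
        rw [hsum]
        have : (d * S.card : ℝ) < 2 * (S.biUnion f).card := by
          push_cast at h ⊢; linarith
        exact_mod_cast this
      obtain ⟨s, hsS, r, hrs, hru⟩ := exists_unique_neighbor S f hcount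
      have hsub : S.erase s ⊂ S := Finset.erase_ssubset hsS
      obtain ⟨l', hnd', htf', hpk'⟩ := ih (S.erase s) hsub
        (fun t ht => hf t (Finset.mem_of_mem_erase ht))
        (fun T hT hTne => hexp T (hT.trans (Finset.erase_subset _ _)) hTne)
      refine ⟨s :: l', ?_, ?_, ?_⟩
      · refine List.nodup_cons.mpr ⟨?_, hnd'⟩
        intro hmem
        have : s ∈ S.erase s := htf' ▸ List.mem_toFinset.mpr hmem
        exact (Finset.notMem_erase s S) this
      · rw [List.toFinset_cons, htf', Finset.insert_erase hsS]
      · intro i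
        match i with
        | ⟨0, h0⟩ =>
          refine ⟨r, hrs, ?_⟩
          intro j hj hrj
          match j with
          | ⟨0, _⟩ => simp at hj
          | ⟨k+1, hk⟩ =>
            have hmem : l'.get ⟨k, Nat.lt_of_succ_lt_succ hk⟩ ∈ S.erase s := by
              rw [← htf']
              exact List.mem_toFinset.mpr (List.get_mem _ _)
            have := hru _ (Finset.mem_of_mem_erase hmem) hrj
            exact (Finset.ne_of_mem_erase hmem) this
        | ⟨k+1, hk⟩ =>
          obtain ⟨r', hr', hr'u⟩ := hpk' ⟨k, Nat.lt_of_succ_lt_succ hk⟩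
          refine ⟨r', hr', ?_⟩
          intro j hj
          match j with
          | ⟨0, _⟩ => simp at hj
          | ⟨m+1, hm⟩ =>
            exact hr'u ⟨m, Nat.lt_of_succ_lt_succ hm⟩ (Nat.lt_of_succ_lt_succ hj)
end
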